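/- Let N ≥ 2, let h > 0 and P ≥ 0 be real numbers with h·P < 2, and let q, p : Fin N → ℝ satisfy q i > 0 and |p i| ≤ P for all i. Let L be the N × N real matrix whose only nonzero entries are: L₀₀ = 1, L_{N−1,N−1} = 1, and, for every interior index i (0 < i < N−1), L_{i,i−1} = 1 + h·(p i)/2, L_{i,i} = −2 − h²·(q i), L_{i,i+1} = 1 − h·(p i)/2. Then det L ≠ 0; in particular L is invertible. -/

import Mathlib

/-- The tridiagonal matrix of the central-difference relaxation method is
nonsingular under the conditions `q > 0`, `|p| ≤ P`, `h > 0`, `h·P < 2`. -/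
theorem relaxation_matrix_det_ne_zero (N : ℕ) (hN : 2 ≤ N)
    (h P : ℝ) (hh : 0 < h) (hP : 0 ≤ P) (hhP : h * P < 2)
    (q p : Fin N → ℝ) (hq : ∀ i, 0 < q i) (hp : ∀ i, |p i| ≤ P)
    (L : Matrix (Fin N) (Fin N) ℝ)
    (hL : ∀ i j : Fin N,
      L i j =
        if i.val = 0 ∨ i.val = N - 1 then
          (if j = i then 1 else 0)
        else
          if j.val + 1 = i.val then 1 + h * p i / 2
          else if j = i then -2 - h^2 * q i
          else if j.val = i.val + 1 then 1 - h * p i / 2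
          else 0) :
    L.det ≠ 0 := by
  apply det_ne_zero_of_sum_row_lt_diag
  intro k
  by_cases hk : k.val = 0 ∨ k.val = N - 1
  · have hdiag : L k k = 1 := by rw [hL]; simp [hk]
    have hsum : ∑ j ∈ Finset.univ.erase k, ‖L k j‖ = 0 := by
      apply Finset.sum_eq_zero
      intro j hj
      have hjk : j ≠ k := (Finset.mem_erase.mp hj).1
      rw [hL]; simp [hk, hjk]
    rw [hsum, hdiag]
    norm_num
  · push_neg at hk
    obtain ⟨hk0, hkN⟩ := hk
    have hk0' : 0 < k.val := Nat.pos_of_ne_zero hk0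
    have hkN' : k.val < N - 1 := lt_of_le_of_ne (by omega) hkN
    set a : Fin N := ⟨k.val - 1, by omega⟩ with ha
    set b : Fin N := ⟨k.val + 1, by omega⟩ with hb
    have hab : a ≠ b := by
      rw [ha, hb, Ne, Fin.mk.injEq]
      omega
    have hak : a ≠ k := by
      rw [ha, Ne, Fin.ext_iff]
      simp only [Fin.val_mk]
      omega
    have hbk : b ≠ k := by
      rw [hb, Ne, Fin.ext_iff]
      simp only [Fin.val_mk]
      omega
    have hLa : L k a = 1 + h * p k / 2 := by
      rw [hL]
      have : a.val + 1 = k.val := by simp [ha]; omega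
      simp [hk0, hkN, this]
    have hLb : L k b = 1 - h * p k / 2 := by
      rw [hL]
      have h1 : ¬ (b.val + 1 = k.val) := by simp only [hb, Fin.val_mk]; omega
      have h2 : b.val = k.val + 1 := rfl
      simp [hk0, hkN, h1, hbk, h2]
      intro h'; omega
    have hdiag : L k k = -2 - h^2 * q k := by
      rw [hL]
      simp [hk0, hkN]
    have hsub : ({a, b} : Finset (Fin N)) ⊆ Finset.univ.erase k := by
      intro j hj
      simp only [Finset.mem_insert, Finset.mem_singleton] at hj
      rcases hj with rfl | rfl
      · exact Finset.mem_erase.mpr ⟨hak, Finset.mem_univ _⟩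
      · exact Finset.mem_erase.mpr ⟨hbk, Finset.mem_univ _⟩
    have hzero : ∀ j ∈ Finset.univ.erase k, j ∉ ({a, b} : Finset (Fin N)) → ‖L k j‖ = 0 := by
      intro j hj hjab
      simp only [Finset.mem_insert, Finset.mem_singleton, not_or] at hjab
      obtain ⟨hja, hjb⟩ := hjab
      have hjk : j ≠ k := (Finset.mem_erase.mp hj).1
      have h1 : ¬ (j.val + 1 = k.val) := by
        intro h'
        apply hja
        apply Fin.ext
        simp [ha]; omega
      have h3 : ¬ (j.val = k.val + 1) := by
        intro h'
        apply hjb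
        apply Fin.ext
        simp [hb, h']
      rw [hL]
      simp [hk0, hkN, h1, h3, hjk]
    have hsum : ∑ j ∈ Finset.univ.erase k, ‖L k j‖ = ‖L k a‖ + ‖L k b‖ := by
      rw [← Finset.sum_subset hsub hzero, Finset.sum_pair hab]
    have hpk : h * |p k| < 2 := by
      calc h * |p k| ≤ h * P := by
            exact mul_le_mul_of_nonneg_left (hp k) hh.le
        _ < 2 := hhP
    have habs : |h * p k / 2| < 1 := by
      rw [abs_div, abs_mul, abs_of_pos hh]
      rw [abs_of_pos (by norm_num : (0:ℝ) < 2)]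
      linarith
    have h1 : ‖L k a‖ = 1 + h * p k / 2 := by
      rw [hLa, Real.norm_eq_abs, abs_of_nonneg]
      cases abs_lt.mp habs; linarith
    have h2 : ‖L k b‖ = 1 - h * p k / 2 := by
      rw [hLb, Real.norm_eq_abs, abs_of_nonneg]
      cases abs_lt.mp habs; linarith
    have h3 : ‖L k k‖ = 2 + h^2 * q k := by
      rw [hdiag, Real.norm_eq_abs, abs_of_nonpos]
      · ring
      · nlinarith [hq k, sq_nonneg h]
    rw [hsum, h1, h2, h3]
    have := mul_pos (pow_pos hh 2) (hq k)
    linarith
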